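/- Let N ≥ 1 and let A ⊆ K_N = {k ∈ ℤ³ : k ≠ 0, |k|_∞ ≤ N} be a set satisfying: (i) (1,0,0), (0,1,0), (0,0,1) ∈ A; (ii) if m ∈ A then −m ∈ A (when −m ∈ K_N); (iii) if m, n ∈ A are linearly independent with |m| ≠ |n| and m + n ∈ K_N, then m + n ∈ A; (iv) if m, n ∈ A with |m| = |n| and m + n ∈ K_N, then m + n ∈ A. Then A = K_N. -/
import Mathlib


open Finset

def KN (N : ℕ) : Set (Fin 3 → ℤ) :=
  {k | k ≠ 0 ∧ max (|k 0|) (max (|k 1|) (|k 2|)) ≤ (N : ℤ)}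

/-- Embed an integer vector in ℝ³. -/
noncomputable def toReal3 (m : Fin 3 → ℤ) : Fin 3 → ℝ := fun i => (m i : ℝ)

/-- Auxiliary: axis vector with value `c` at coordinate `i`. -/
def ax (c : ℤ) (i : Fin 3) : Fin 3 → ℤ := fun j => if j = i then c else 0

lemma ax_self (c : ℤ) (i : Fin 3) : ax c i i = c := by simp [ax]

lemma ax_ne (c : ℤ) {i l : Fin 3} (h : l ≠ i) : ax c i l = 0 := by simp [ax, h]

lemma ax_add (a b : ℤ) (i : Fin 3) : ax a i + ax b i = ax (a + b) i := by
  funext l; by_cases h : l = i <;> simp [ax, h]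

lemma ax_zero (i : Fin 3) : ax 0 i = 0 := by
  funext l; by_cases h : l = i <;> simp [ax, h]

lemma neg_ax (c : ℤ) (i : Fin 3) : -(ax c i) = ax (-c) i := by
  funext l; by_cases h : l = i <;> simp [ax, h]

lemma sumsq_ax (c : ℤ) (i : Fin 3) : ∑ l, (ax c i l) ^ 2 = c ^ 2 := by
  fin_cases i <;> simp [ax, Fin.sum_univ_three]

lemma sumsq_two_ax (a b : ℤ) {i j : Fin 3} (h : j ≠ i) :
    ∑ l, ((ax a i + ax b j) l) ^ 2 = a ^ 2 + b ^ 2 := by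
  fin_cases i <;> fin_cases j <;> simp_all [ax, Fin.sum_univ_three] <;> ring

lemma mem_KN_iff {N : ℕ} {k : Fin 3 → ℤ} :
    k ∈ KN N ↔ (k 0 ≠ 0 ∨ k 1 ≠ 0 ∨ k 2 ≠ 0) ∧
      (k 0).natAbs ≤ N ∧ (k 1).natAbs ≤ N ∧ (k 2).natAbs ≤ N := by
  have hz : k ≠ 0 ↔ (k 0 ≠ 0 ∨ k 1 ≠ 0 ∨ k 2 ≠ 0) := by
    rw [Function.ne_iff]
    constructor
    · rintro ⟨i, hi⟩; fin_cases i <;> simp_all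
    · rintro (h | h | h) <;> exact ⟨_, h⟩
  have habs : ∀ x : ℤ, |x| ≤ (N : ℤ) ↔ x.natAbs ≤ N := fun x => by
    rw [Int.abs_eq_natAbs]; exact_mod_cast Iff.rfl
  simp only [KN, Set.mem_setOf_eq, max_le_iff, hz, habs]

lemma ax_mem_KN {N : ℕ} {c : ℤ} (i : Fin 3) (hc : c ≠ 0) (hcN : c.natAbs ≤ N) :
    ax c i ∈ KN N := by
  rw [mem_KN_iff]
  fin_cases i <;> simp [ax] <;> omega

lemma two_ax_mem_KN {N : ℕ} {a b : ℤ} {i j : Fin 3} (hij : j ≠ i) (ha : a ≠ 0)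
    (haN : a.natAbs ≤ N) (hbN : b.natAbs ≤ N) : ax a i + ax b j ∈ KN N := by
  rw [mem_KN_iff]
  fin_cases i <;> fin_cases j <;> simp_all [ax] <;> omega

lemma li_det {m n : Fin 3 → ℤ} (i j : Fin 3) (h : m i * n j ≠ m j * n i) :
    LinearIndependent ℝ ![toReal3 m, toReal3 n] := by
  rw [LinearIndependent.pair_iff]
  intro s t hst
  have hi := congrFun hst i
  have hj := congrFun hst j
  simp only [Pi.add_apply, Pi.smul_apply, toReal3, smul_eq_mul, Pi.zero_apply] at hi hj
  have hd : ((m i : ℝ) * n j - m j * n i) ≠ 0 := by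
    intro h0
    apply h
    have := sub_eq_zero.mp h0
    exact_mod_cast this
  constructor
  · have hs : s * ((m i : ℝ) * n j - m j * n i) = 0 := by
      linear_combination (n j : ℝ) * hi - (n i : ℝ) * hj
    rcases mul_eq_zero.mp hs with h' | h'
    · exact h'
    · exact absurd h' hd
  · have ht : t * ((m i : ℝ) * n j - m j * n i) = 0 := by
      linear_combination -(m j : ℝ) * hi + (m i : ℝ) * hj
    rcases mul_eq_zero.mp ht with h' | h'
    · exact h'
    · exact absurd h' hd

theorem generate_all_modes (N : ℕ) (hN : 1 ≤ N) (A : Set (Fin 3 → ℤ))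
    (hsub : A ⊆ KN N)
    (h1 : (fun i => if i = 0 then 1 else 0) ∈ A)
    (h2 : (fun i => if i = 1 then 1 else 0) ∈ A)
    (h3 : (fun i => if i = 2 then 1 else 0) ∈ A)
    (hneg : ∀ m ∈ A, -m ∈ KN N → -m ∈ A)
    (hindep : ∀ m ∈ A, ∀ n ∈ A,
      LinearIndependent ℝ ![toReal3 m, toReal3 n] →
      (∑ i, (m i) ^ 2) ≠ (∑ i, (n i) ^ 2) → m + n ∈ KN N → m + n ∈ A)
    (heq : ∀ m ∈ A, ∀ n ∈ A,
      (∑ i, (m i) ^ 2) = (∑ i, (n i) ^ 2) → m + n ∈ KN N → m + n ∈ A) :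
    A = KN N := by
  -- unit vectors
  have he : ∀ i : Fin 3, ax 1 i ∈ A := by
    intro i; fin_cases i
    · exact h1
    · exact h2
    · exact h3
  have hs1 : ∀ s : ℤ, (s = 1 ∨ s = -1) → ∀ i : Fin 3, ax s i ∈ A := by
    rintro s (rfl | rfl) i
    · exact he i
    · have h' := hneg (ax 1 i) (he i)
        (by rw [neg_ax]; exact ax_mem_KN i (by norm_num) (by simpa using hN))
      rwa [neg_ax] at h'
  have main : ∀ n : ℕ, ∀ k, k ∈ KN N →
      (k 0).natAbs + (k 1).natAbs + (k 2).natAbs = n → k ∈ A := by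
    intro n
    induction n using Nat.strong_induction_on with
    | _ n IH =>
      intro k hk hn
      obtain ⟨hknz, hb0, hb1, hb2⟩ := mem_KN_iff.mp hk
      have hkabs : ∀ l, (k l).natAbs ≤ N := by
        intro l; fin_cases l <;> assumption
      obtain ⟨i, hi⟩ : ∃ i, k i ≠ 0 := by
        rcases hknz with h | h | h
        exacts [⟨0, h⟩, ⟨1, h⟩, ⟨2, h⟩]
      by_cases hone : ∀ l, l ≠ i → k l = 0
      · -- axis case
        have hk_eq : k = ax (k i) i := by
          funext l
          by_cases h : l = i
          · subst h; simp [ax]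
          · simp [ax, h, hone l h]
        obtain ⟨c, hc_def⟩ : ∃ c : ℤ, c = k i := ⟨k i, rfl⟩
        rw [← hc_def] at hk_eq
        have hc : c ≠ 0 := hc_def ▸ hi
        have hcN : c.natAbs ≤ N := hc_def ▸ hkabs i
        have hnc : c.natAbs = n := by
          rw [hk_eq] at hn
          have : (ax c i 0).natAbs + (ax c i 1).natAbs + (ax c i 2).natAbs = c.natAbs := by
            fin_cases i <;> simp [ax]
          omega
        rw [hk_eq]
        rcases Nat.lt_or_ge c.natAbs 2 with hsmall | hbig
        · -- |c| = 1
          have : c = 1 ∨ c = -1 := by omega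
          exact hs1 c this i
        rcases Nat.lt_or_ge c.natAbs 3 with hsmall | hbig3
        · -- |c| = 2
          have hc2 : c = 2 ∨ c = -2 := by omega
          have hN2 : 2 ≤ N := by omega
          rcases hc2 with rfl | rfl
          · have := heq (ax 1 i) (he i) (ax 1 i) (he i) rfl
              (by rw [ax_add]; exact ax_mem_KN i (by norm_num) (by simpa using hN2))
            rw [ax_add] at this
            norm_num at this
            exact this
          · have hA := hs1 (-1) (Or.inr rfl) i
            have := heq (ax (-1) i) hA (ax (-1) i) hA rfl
              (by rw [ax_add]; exact ax_mem_KN i (by norm_num) (by simpa using hN2))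
            rw [ax_add] at this
            norm_num at this
            exact this
        · -- |c| ≥ 3
          obtain ⟨s, hs, b, hb2, hcb⟩ :
              ∃ s : ℤ, (s = 1 ∨ s = -1) ∧ ∃ b : ℤ, 2 ≤ b ∧ c = s * (b + 1) := by
            rcases lt_or_gt_of_ne hc with h | h
            · exact ⟨-1, Or.inr rfl, -c - 1, by omega, by ring⟩
            · exact ⟨1, Or.inl rfl, c - 1, by omega, by ring⟩
          obtain ⟨j, hji⟩ : ∃ j : Fin 3, j ≠ i := by
            fin_cases i
            exacts [⟨1, by decide⟩, ⟨0, by decide⟩, ⟨0, by decide⟩]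
          have hsb0 : s * b ≠ 0 := by rcases hs with rfl | rfl <;> omega
          have hsbN : (s * b).natAbs ≤ N := by rcases hs with rfl | rfl <;> omega
          have hsblt : (s * b).natAbs < n := by rcases hs with rfl | rfl <;> omega
          -- step 0 : ax (s*b) i ∈ A by induction
          have hm0KN : ax (s * b) i ∈ KN N := ax_mem_KN i hsb0 hsbN
          have hm0 : ax (s * b) i ∈ A := by
            apply IH ((s * b).natAbs) _ _ hm0KN
            · fin_cases i <;> simp [ax]
            · omega
          -- step 1 : add e_j
          have harg : s * b + s = c := by rw [hcb]; ring
          have step1 : ax (s * b) i + ax 1 j ∈ A := by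
            apply hindep _ hm0 _ (he j)
            · apply li_det i j
              simp only [ax_self, ax_ne _ hji, ax_ne _ hji.symm]
              simpa using hsb0
            · rw [sumsq_ax, sumsq_ax]
              intro hcon
              rcases hs with rfl | rfl <;> nlinarith
            · exact two_ax_mem_KN hji hsb0 hsbN (by simpa using hN)
          -- step 2 : add s e_i
          have e2 : (ax (s * b) i + ax 1 j) + ax s i = ax c i + ax 1 j := by
            rw [add_right_comm, ax_add, harg]
          have step2 : ax c i + ax 1 j ∈ A := by
            have := hindep _ step1 _ (hs1 s hs i) ?_ ?_ ?_
            · rwa [e2] at this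
            · apply li_det j i
              simp only [Pi.add_apply, ax_self, ax_ne _ hji, ax_ne _ hji.symm]
              rcases hs with rfl | rfl <;> norm_num
            · rw [sumsq_two_ax _ _ hji, sumsq_ax]
              intro hcon
              rcases hs with rfl | rfl <;> nlinarith
            · rw [e2]
              exact two_ax_mem_KN hji hc hcN (by simpa using hN)
          -- step 3 : add -e_j
          have e3 : (ax c i + ax 1 j) + ax (-1) j = ax c i := by
            rw [add_assoc, ax_add]
            norm_num [ax_zero]
          have step3 := hindep _ step2 _ (hs1 (-1) (Or.inr rfl) j) ?_ ?_ ?_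
          · rwa [e3] at step3
          · apply li_det i j
            simp only [Pi.add_apply, ax_self, ax_ne _ hji, ax_ne _ hji.symm]
            simpa using hc
          · rw [sumsq_two_ax _ _ hji, sumsq_ax]
            intro hcon
            have : c ^ 2 = 0 := by nlinarith
            exact hc (by nlinarith)
          · rw [e3]
            exact ax_mem_KN i hc hcN
      · -- at least two nonzero coordinates
        push_neg at hone
        obtain ⟨j, hji, hj⟩ := hone
        obtain ⟨s, hs, hsk⟩ :
            ∃ s : ℤ, (s = 1 ∨ s = -1) ∧ (k i - s).natAbs + 1 = (k i).natAbs := by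
          rcases lt_or_gt_of_ne hi with h | h
          · exact ⟨-1, Or.inr rfl, by omega⟩
          · exact ⟨1, Or.inl rfl, by omega⟩
        set m := k - ax s i with hm
        have hmi : m i = k i - s := by simp [hm, ax]
        have hml : ∀ l, l ≠ i → m l = k l := by
          intro l hl; simp [hm, ax_ne _ hl]
        have hmj : m j ≠ 0 := by rw [hml j hji]; exact hj
        have key : ∀ l : Fin 3, (m l).natAbs + (if l = i then 1 else 0) = (k l).natAbs := by
          intro l
          by_cases h : l = i
          · subst h; rw [hmi]; simp; omega
          · simp [h, hml l h]
        have hmb : ∀ l, (m l).natAbs ≤ N := by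
          intro l
          have := key l
          have := hkabs l
          by_cases h : l = i <;> simp [h] at * <;> omega
        have hmKN : m ∈ KN N := by
          rw [mem_KN_iff]
          refine ⟨?_, ?_, ?_, ?_⟩
          · fin_cases j
            exacts [Or.inl hmj, Or.inr (Or.inl hmj), Or.inr (Or.inr hmj)]
          · exact hmb 0
          · exact hmb 1
          · exact hmb 2
        have hnrm : (m 0).natAbs + (m 1).natAbs + (m 2).natAbs + 1 = n := by
          have k0 := key 0
          have k1 := key 1
          have k2 := key 2
          have hione : (if (0 : Fin 3) = i then (1:ℕ) else 0) +
              (if (1 : Fin 3) = i then 1 else 0) +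
              (if (2 : Fin 3) = i then 1 else 0) = 1 := by
            fin_cases i <;> decide
          omega
        have hmA : m ∈ A := IH _ (by omega) m hmKN rfl
        have hkm : m + ax s i = k := by
          funext l
          by_cases h : l = i
          · subst h; rw [Pi.add_apply, hmi, ax_self]; ring
          · rw [Pi.add_apply, hml l h, ax_ne _ h, add_zero]
        by_cases hsq : (∑ l, (m l) ^ 2) = 1
        · have := heq m hmA (ax s i) (hs1 s hs i)
            (by rw [sumsq_ax]; rcases hs with rfl | rfl <;> norm_num <;> exact hsq)
            (hkm ▸ hk)
          rwa [hkm] at this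
        · have hli : LinearIndependent ℝ ![toReal3 m, toReal3 (ax s i)] := by
            apply li_det j i
            rw [ax_self, ax_ne _ hji]
            rcases hs with rfl | rfl <;> simpa using hmj
          have := hindep m hmA (ax s i) (hs1 s hs i) hli
            (by rw [sumsq_ax]; rcases hs with rfl | rfl <;> norm_num <;> exact hsq)
            (hkm ▸ hk)
          rwa [hkm] at this
  apply Set.Subset.antisymm hsub
  intro k hk
  exact main _ k hk rfl
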